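/- arXiv:0712.2752 — 5 statements merged into one kernel-verified Lean document; each statement's English description precedes it below -/
import Mathlib

section
/- Let n ≥ 2 and let c be a cost with 0 ≤ c ≤ n/(2n−1). Then for every finite simple graph G on n vertices, the performance satisfies Π(G) ≤ n(n−1)(1−c) = Π(K_n). Hence for c ≤ n/(2n−1) (and in particular for all c < 1/2 with n large) the complete graph K_n is efficient. -/
open Classical
open Matrix

/-- `lamPF G` is the largest eigenvalue (Perron–Frobenius eigenvalue) of the real adjacency
matrix of the finite simple graph `G`. -/
noncomputable def lamPF {V : Type*} [Fintype V] (G : SimpleGraph V) : ℝ :=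
  sSup (spectrum ℝ (G.adjMatrix ℝ))

/-- The performance `Π(G) = ∑_{i ∈ V} λ_PF(C_i) - 2 m c`, where `C_i` is the connected
component of vertex `i` (as an induced subgraph), `m` is the number of edges and `c` the
cost per link. -/
noncomputable def perf {V : Type*} [Fintype V] (G : SimpleGraph V) (c : ℝ) : ℝ :=
  (∑ i : V, lamPF (G.induce (G.connectedComponentMk i).supp))
    - 2 * (Nat.card G.edgeSet : ℝ) * c

lemma exists_eigvec {W : Type*} [Fintype W] {A : Matrix W W ℝ} {μ : ℝ}
    (h : μ ∈ spectrum ℝ A) : ∃ x : W → ℝ, x ≠ 0 ∧ A *ᵥ x = μ • x := by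
  rw [spectrum.mem_iff, Matrix.isUnit_iff_isUnit_det, isUnit_iff_ne_zero, not_not] at h
  obtain ⟨v, hv, hmv⟩ := (Matrix.exists_mulVec_eq_zero_iff).2 h
  refine ⟨v, hv, ?_⟩
  have : (algebraMap ℝ (Matrix W W ℝ) μ - A) *ᵥ v = μ • v - A *ᵥ v := by
    rw [Matrix.sub_mulVec, Algebra.algebraMap_eq_smul_one, Matrix.smul_mulVec,
      Matrix.one_mulVec]
  rw [this] at hmv
  linear_combination (norm := module) -hmv

lemma adj_spectrum_bound {W : Type*} [Fintype W] (H : SimpleGraph W) {μ : ℝ}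
    (h : μ ∈ spectrum ℝ (H.adjMatrix ℝ)) :
    ∃ i : W, μ ≤ (H.degree i : ℝ) ∧
      μ ^ 2 ≤ (∑ v : W, (H.degree v : ℝ)) - (H.degree i : ℝ) := by
  obtain ⟨x, hx0, hxe⟩ := exists_eigvec h
  obtain ⟨w₀, hw₀⟩ := Function.ne_iff.mp hx0
  obtain ⟨i, -, hi⟩ := Finset.exists_max_image Finset.univ (fun j => |x j|) ⟨w₀, Finset.mem_univ _⟩
  simp only [Finset.mem_univ, forall_true_left] at hi
  have hxi : x i ≠ 0 := by
    intro hxi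
    have := hi w₀
    rw [hxi, abs_zero, abs_nonpos_iff] at this
    exact hw₀ this
  set y : W → ℝ := if 0 ≤ x i then x else -x with hy
  have hyi : y i = |x i| := by
    rw [hy]; split
    · rw [abs_of_nonneg]; assumption
    · rename_i hneg
      push_neg at hneg
      simp [abs_of_neg hneg]
  have hyipos : 0 < y i := by rw [hyi]; exact abs_pos.mpr hxi
  have hyabs : ∀ j, |y j| = |x j| := by
    intro j; rw [hy]; split <;> simp
  have hyle : ∀ j, y j ≤ y i := fun j =>
    le_trans (le_abs_self _) (by rw [hyabs, hyi]; exact hi j)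
  have hye : H.adjMatrix ℝ *ᵥ y = μ • y := by
    rw [hy]; split
    · exact hxe
    · rw [Matrix.mulVec_neg, hxe, smul_neg]
  set z : W → ℝ := (y i)⁻¹ • y with hz
  have hzi : z i = 1 := by
    rw [hz]; simp [inv_mul_cancel₀ (ne_of_gt hyipos)]
  have hzle : ∀ j, z j ≤ 1 := by
    intro j
    rw [hz, ← hzi, hz]
    simp only [Pi.smul_apply, smul_eq_mul]
    exact mul_le_mul_of_nonneg_left (hyle j) (le_of_lt (inv_pos.mpr hyipos))
  have hze : ∀ j, μ * z j = ∑ k ∈ H.neighborFinset j, z k := by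
    intro j
    have h1 : H.adjMatrix ℝ *ᵥ z = μ • z := by
      rw [hz, Matrix.mulVec_smul, hye, smul_comm]
    have := congrFun h1 j
    rw [SimpleGraph.adjMatrix_mulVec_apply] at this
    rw [this]; simp [mul_comm]
  have hdeg : ∀ j, (∑ k ∈ H.neighborFinset j, z k) ≤ (H.degree j : ℝ) := by
    intro j
    calc (∑ k ∈ H.neighborFinset j, z k) ≤ ∑ _k ∈ H.neighborFinset j, (1 : ℝ) :=
          Finset.sum_le_sum (fun k _ => hzle k)
      _ = (H.degree j : ℝ) := by
          rw [Finset.sum_const, SimpleGraph.card_neighborFinset_eq_degree]; simp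
  have hmu : μ = ∑ k ∈ H.neighborFinset i, z k := by
    have := hze i; rwa [hzi, mul_one] at this
  have hμd : μ ≤ (H.degree i : ℝ) := hmu ▸ hdeg i
  have hsq : μ ^ 2 = ∑ j ∈ H.neighborFinset i, ∑ k ∈ H.neighborFinset j, z k := by
    rw [pow_two]
    calc μ * μ = μ * ∑ j ∈ H.neighborFinset i, z j := by rw [← hmu]
      _ = ∑ j ∈ H.neighborFinset i, μ * z j := by rw [Finset.mul_sum]
      _ = _ := Finset.sum_congr rfl (fun j _ => hze j)
  have hstep : μ ^ 2 ≤ ∑ j ∈ H.neighborFinset i, (H.degree j : ℝ) := by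
    rw [hsq]
    exact Finset.sum_le_sum (fun j _ => hdeg j)
  have hsub : H.neighborFinset i ⊆ Finset.univ.erase i := by
    intro j hj
    rw [Finset.mem_erase]
    refine ⟨?_, Finset.mem_univ _⟩
    intro hji
    subst hji
    have : H.Adj j j := by simpa using hj
    exact H.irrefl this
  have hstep2 : (∑ j ∈ H.neighborFinset i, (H.degree j : ℝ))
      ≤ ∑ j ∈ Finset.univ.erase i, (H.degree j : ℝ) :=
    Finset.sum_le_sum_of_subset_of_nonneg hsub (fun j _ _ => Nat.cast_nonneg _)
  have hstep3 : (∑ j ∈ Finset.univ.erase i, (H.degree j : ℝ))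
      = (∑ v : W, (H.degree v : ℝ)) - (H.degree i : ℝ) := by
    rw [Finset.sum_erase_eq_sub (Finset.mem_univ i)]
  exact ⟨i, hμd, by linarith⟩

lemma adj_spectrum_nonempty {W : Type*} [Fintype W] [Nonempty W] (H : SimpleGraph W) :
    (spectrum ℝ (H.adjMatrix ℝ)).Nonempty := by
  have hA : (H.adjMatrix ℝ).IsHermitian := by
    rw [Matrix.IsHermitian, Matrix.conjTranspose_eq_transpose_of_trivial]
    exact H.isSymm_adjMatrix
  exact ⟨hA.eigenvalues (Classical.arbitrary W), hA.eigenvalues_mem_spectrum_real _⟩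

lemma lamPF_mem {W : Type*} [Fintype W] [Nonempty W] (H : SimpleGraph W) :
    lamPF H ∈ spectrum ℝ (H.adjMatrix ℝ) :=
  (adj_spectrum_nonempty H).csSup_mem (Matrix.finite_spectrum _)

lemma adj_spectrum_le {W : Type*} [Fintype W] (H : SimpleGraph W) {μ : ℝ}
    (h : μ ∈ spectrum ℝ (H.adjMatrix ℝ)) : μ ≤ (Fintype.card W : ℝ) - 1 := by
  obtain ⟨i, h1, -⟩ := adj_spectrum_bound H h
  have h2 : (H.degree i : ℝ) < (Fintype.card W : ℝ) :=
    (Nat.cast_lt (α := ℝ)).mpr (H.degree_lt_card_verts i)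
  have h3 : (H.degree i : ℝ) + 1 ≤ (Fintype.card W : ℝ) := by
    have := Nat.succ_le_of_lt (H.degree_lt_card_verts i)
    exact_mod_cast (Nat.cast_le (α := ℝ)).mpr this
  linarith

lemma lamPF_le {W : Type*} [Fintype W] [Nonempty W] (H : SimpleGraph W) :
    lamPF H ≤ (Fintype.card W : ℝ) - 1 :=
  adj_spectrum_le H (lamPF_mem H)

lemma lamPF_stanley {W : Type*} [Fintype W] [Nonempty W] (H : SimpleGraph W) :
    lamPF H ^ 2 + lamPF H ≤ ∑ v : W, (H.degree v : ℝ) := by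
  obtain ⟨i, h1, h2⟩ := adj_spectrum_bound H (lamPF_mem H)
  linarith

lemma lamPF_top {W : Type*} [Fintype W] [Nonempty W] :
    lamPF (⊤ : SimpleGraph W) = (Fintype.card W : ℝ) - 1 := by
  refine le_antisymm
    (csSup_le (adj_spectrum_nonempty _) (fun μ hμ => adj_spectrum_le _ hμ))
    (le_csSup ((Matrix.finite_spectrum _).bddAbove) ?_)
  rw [spectrum.mem_iff, Matrix.isUnit_iff_isUnit_det, isUnit_iff_ne_zero, not_not]
  rw [← Matrix.exists_mulVec_eq_zero_iff]
  refine ⟨fun _ => 1, ?_, ?_⟩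
  · intro h0
    have := congrFun h0 (Classical.arbitrary W)
    simp at this
  · funext v
    rw [Matrix.sub_mulVec, Algebra.algebraMap_eq_smul_one, Matrix.smul_mulVec,
      Matrix.one_mulVec]
    have h1 : 1 ≤ Fintype.card W := Fintype.card_pos
    simp only [Pi.sub_apply, Pi.smul_apply, smul_eq_mul, mul_one, Pi.zero_apply,
      Matrix.mulVec, dotProduct, SimpleGraph.adjMatrix_apply, SimpleGraph.top_adj]
    rw [Finset.sum_boole, Finset.filter_ne, Finset.card_erase_of_mem (Finset.mem_univ v),
      Finset.card_univ, Nat.cast_sub h1, Nat.cast_one]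
    ring

section Components

variable {V : Type*} [Fintype V] {G : SimpleGraph V}

lemma mem_supp_of_adj {C : G.ConnectedComponent} {v w : V} (hv : v ∈ C.supp)
    (h : G.Adj v w) : w ∈ C.supp := by
  rw [SimpleGraph.ConnectedComponent.mem_supp_iff] at hv ⊢
  rw [← hv]
  exact SimpleGraph.ConnectedComponent.sound h.symm.reachable

lemma degree_induce_supp (C : G.ConnectedComponent) (v : C.supp) :
    (G.induce C.supp).degree v = G.degree (v : V) := by
  have hmap : ((G.induce C.supp).neighborFinset v).map
      ⟨Subtype.val, Subtype.val_injective⟩ = G.neighborFinset (v : V) := by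
    ext w
    simp only [Finset.mem_map, SimpleGraph.mem_neighborFinset, Function.Embedding.coeFn_mk,
      SimpleGraph.comap_adj, Function.Embedding.coe_subtype]
    constructor
    · rintro ⟨u, hu, rfl⟩
      exact hu
    · intro hw
      exact ⟨⟨w, mem_supp_of_adj v.2 hw⟩, hw, rfl⟩
  rw [← SimpleGraph.card_neighborFinset_eq_degree, ← SimpleGraph.card_neighborFinset_eq_degree,
    ← hmap, Finset.card_map]

lemma sum_degree_induce_supp (C : G.ConnectedComponent) :
    (∑ v : C.supp, ((G.induce C.supp).degree v : ℝ))
      = ∑ v ∈ Finset.univ.filter (fun v => G.connectedComponentMk v = C), (G.degree v : ℝ) := by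
  rw [← Finset.sum_coe_sort (Finset.univ.filter (fun v => G.connectedComponentMk v = C))
    (fun v => (G.degree v : ℝ))]
  apply Finset.sum_nbij' (fun v => ⟨(v : V), by simpa using (SimpleGraph.ConnectedComponent.mem_supp_iff C (v : V)).mp v.2⟩)
    (fun v => ⟨(v : V), by
      have := v.2
      simp only [Finset.mem_filter] at this
      exact (SimpleGraph.ConnectedComponent.mem_supp_iff C (v : V)).mpr this.2⟩)
  · intro v _; exact Finset.mem_univ _
  · intro v _; exact Finset.mem_univ _
  · intro v _; ext; rfl
  · intro v _; ext; rfl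
  · intro v _
    rw [degree_induce_supp]

lemma card_supp_eq (C : G.ConnectedComponent) :
    Fintype.card C.supp
      = (Finset.univ.filter (fun v => G.connectedComponentMk v = C)).card := by
  rw [← Set.toFinset_card]
  congr 1
  ext v
  simp [SimpleGraph.ConnectedComponent.mem_supp_iff]

end Components

lemma key_component_ineq (n : ℕ) (k : ℕ) (c lam D : ℝ) (hn : 2 ≤ n)
    (hc0 : 0 ≤ c) (hcn : c * (2 * (n : ℝ) - 1) ≤ n)
    (hk1 : 1 ≤ k) (hkn : k ≤ n)
    (hlk : lam ≤ (k : ℝ) - 1) (hst : lam ^ 2 + lam ≤ D) :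
    (k : ℝ) * lam - c * D ≤ (k : ℝ) * ((k : ℝ) - 1) * (1 - c) := by
  have hk1' : (1 : ℝ) ≤ (k : ℝ) := by exact_mod_cast hk1
  have hkn' : (k : ℝ) ≤ (n : ℝ) := by exact_mod_cast hkn
  have hck : c * (2 * (k : ℝ) - 1) ≤ (k : ℝ) := by
    rcases le_or_gt c (1 / 2) with h | h
    · nlinarith
    · nlinarith [mul_nonneg (by linarith : (0:ℝ) ≤ 2 * c - 1) (by linarith : (0:ℝ) ≤ (n:ℝ) - k)]
  have hfac : 0 ≤ ((k : ℝ) - 1 - lam) * ((k : ℝ) * (1 - c) - c * lam) := by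
    apply mul_nonneg (by linarith)
    nlinarith
  nlinarith [mul_le_mul_of_nonneg_left hst hc0]


lemma handshake_real {V : Type*} [Fintype V] (G : SimpleGraph V) :
    2 * (Nat.card G.edgeSet : ℝ) = ∑ v : V, (G.degree v : ℝ) := by
  have h1 := SimpleGraph.sum_degrees_eq_twice_card_edges G
  have h2 : Nat.card G.edgeSet = G.edgeFinset.card := by
    rw [Nat.card_eq_fintype_card, SimpleGraph.edgeFinset_card]
  rw [h2]
  exact_mod_cast congrArg (Nat.cast : ℕ → ℝ) h1.symm

set_option maxHeartbeats 1000000 in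
lemma perf_le_generic {V : Type*} [Fintype V] (G : SimpleGraph V) (n : ℕ)
    (hcard : Fintype.card V = n) (hn : 2 ≤ n) (c : ℝ)
    (hc0 : 0 ≤ c) (hcn : c * (2 * (n : ℝ) - 1) ≤ (n : ℝ)) (hc1 : c ≤ 1) :
    perf G c ≤ (n : ℝ) * ((n : ℝ) - 1) * (1 - c) := by
  have hn1 : (1 : ℝ) ≤ (n : ℝ) := by exact_mod_cast Nat.one_le_of_lt hn
  unfold perf
  rw [show 2 * (Nat.card G.edgeSet : ℝ) * c = (∑ v : V, (G.degree v : ℝ)) * c by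
    rw [handshake_real]]
  have hgroup : (∑ i : V, lamPF (G.induce (G.connectedComponentMk i).supp))
      = ∑ C : G.ConnectedComponent,
          ∑ i ∈ Finset.univ.filter (fun i => G.connectedComponentMk i = C),
            lamPF (G.induce (G.connectedComponentMk i).supp) :=
    (Finset.sum_fiberwise _ _ _).symm
  have hdeg : (∑ v : V, (G.degree v : ℝ))
      = ∑ C : G.ConnectedComponent,
          ∑ i ∈ Finset.univ.filter (fun i => G.connectedComponentMk i = C),
            (G.degree i : ℝ) :=
    (Finset.sum_fiberwise _ _ _).symm
  rw [hgroup, hdeg, Finset.sum_mul, ← Finset.sum_sub_distrib]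
  have hbound : ∀ C : G.ConnectedComponent,
      ((∑ i ∈ Finset.univ.filter (fun i => G.connectedComponentMk i = C),
          lamPF (G.induce (G.connectedComponentMk i).supp))
        - (∑ i ∈ Finset.univ.filter (fun i => G.connectedComponentMk i = C),
            (G.degree i : ℝ)) * c)
      ≤ (Fintype.card C.supp : ℝ) * ((Fintype.card C.supp : ℝ) - 1) * (1 - c) := by
    intro C
    obtain ⟨v₀, hv₀⟩ := C.exists_rep
    have hne : Nonempty C.supp :=
      ⟨⟨v₀, (SimpleGraph.ConnectedComponent.mem_supp_iff C v₀).mpr hv₀⟩⟩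
    set k := Fintype.card C.supp with hk
    have hk1 : 1 ≤ k := Fintype.card_pos
    have hkn : k ≤ n := by
      have := Fintype.card_le_of_injective (Subtype.val : C.supp → V)
        Subtype.val_injective
      rwa [hcard] at this
    have hsum1 : (∑ i ∈ Finset.univ.filter (fun i => G.connectedComponentMk i = C),
        lamPF (G.induce (G.connectedComponentMk i).supp))
          = (k : ℝ) * lamPF (G.induce C.supp) := by
      rw [Finset.sum_congr rfl (fun i hi => by
        rw [(Finset.mem_filter.mp hi).2]), Finset.sum_const, hk, card_supp_eq C,
        nsmul_eq_mul]
    have hsum2 : (∑ i ∈ Finset.univ.filter (fun i => G.connectedComponentMk i = C),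
        (G.degree i : ℝ)) = ∑ v : C.supp, ((G.induce C.supp).degree v : ℝ) :=
      (sum_degree_induce_supp C).symm
    rw [hsum1, hsum2]
    have hst := lamPF_stanley (G.induce C.supp)
    have hlk : lamPF (G.induce C.supp) ≤ (k : ℝ) - 1 := lamPF_le (G.induce C.supp)
    have := key_component_ineq n k c (lamPF (G.induce C.supp))
      (∑ v : C.supp, ((G.induce C.supp).degree v : ℝ)) hn hc0 hcn hk1 hkn hlk hst
    linarith
  calc (∑ C : G.ConnectedComponent,
        ((∑ i ∈ Finset.univ.filter (fun i => G.connectedComponentMk i = C),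
          lamPF (G.induce (G.connectedComponentMk i).supp))
        - (∑ i ∈ Finset.univ.filter (fun i => G.connectedComponentMk i = C),
            (G.degree i : ℝ)) * c))
      ≤ ∑ C : G.ConnectedComponent,
          (Fintype.card C.supp : ℝ) * ((Fintype.card C.supp : ℝ) - 1) * (1 - c) :=
        Finset.sum_le_sum (fun C _ => hbound C)
    _ ≤ ∑ C : G.ConnectedComponent,
          (Fintype.card C.supp : ℝ) * ((n : ℝ) - 1) * (1 - c) := by
        apply Finset.sum_le_sum
        intro C _
        have hkn : (Fintype.card C.supp : ℝ) ≤ (n : ℝ) := by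
          have := Fintype.card_le_of_injective (Subtype.val : C.supp → V)
            Subtype.val_injective
          rw [hcard] at this
          exact_mod_cast this
        have h0 : (0 : ℝ) ≤ (Fintype.card C.supp : ℝ) := Nat.cast_nonneg _
        nlinarith [mul_nonneg (mul_nonneg h0 (by linarith : (0:ℝ) ≤ 1 - c))
          (by linarith : (0:ℝ) ≤ (n : ℝ) - (Fintype.card C.supp : ℝ))]
    _ = ((∑ C : G.ConnectedComponent, (Fintype.card C.supp : ℝ))) * ((n : ℝ) - 1) * (1 - c) := by
        rw [Finset.sum_mul, Finset.sum_mul]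
    _ = (n : ℝ) * ((n : ℝ) - 1) * (1 - c) := by
        have hsum : (∑ C : G.ConnectedComponent, (Fintype.card C.supp : ℝ)) = (n : ℝ) := by
          have h1 : (∑ C : G.ConnectedComponent,
              ((Finset.univ.filter (fun v => G.connectedComponentMk v = C)).card : ℝ))
              = ((Finset.univ.filter (fun v : V =>
                  G.connectedComponentMk v ∈ (Finset.univ : Finset G.ConnectedComponent))).card : ℝ) := by
            exact_mod_cast congrArg (Nat.cast : ℕ → ℝ)
              (Finset.sum_card_fiberwise_eq_card_filter _ _ _)
          rw [Finset.sum_congr rfl (fun C _ => by rw [card_supp_eq C]), h1]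
          simp [hcard]
        rw [hsum]

set_option maxHeartbeats 1000000 in
lemma perf_top_generic {V : Type*} [Fintype V] [Nonempty V] (G : SimpleGraph V) (hG : G = ⊤)
    (c : ℝ) :
    perf G c = (Fintype.card V : ℝ) * ((Fintype.card V : ℝ) - 1) * (1 - c) := by
  have hn1 : 1 ≤ Fintype.card V := Fintype.card_pos
  have hdeg : ∀ v : V, (G.degree v : ℝ) = (Fintype.card V : ℝ) - 1 := by
    intro v
    have hv : G.degree v = Fintype.card V - 1 := by
      subst hG
      have h2 := SimpleGraph.complete_graph_degree (V := V) v
      rw [← h2]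
      congr!
    rw [hv, Nat.cast_sub hn1, Nat.cast_one]
  have hsupp : ∀ i : V, (G.connectedComponentMk i).supp = Set.univ := by
    intro i
    ext j
    simp only [Set.mem_univ, iff_true, SimpleGraph.ConnectedComponent.mem_supp_iff]
    apply SimpleGraph.ConnectedComponent.sound
    by_cases h : j = i
    · subst h; exact SimpleGraph.Reachable.refl j
    · refine SimpleGraph.Adj.reachable ?_
      rw [hG]
      exact h
  haveI : Nonempty (Set.univ : Set V) := ⟨⟨Classical.arbitrary V, trivial⟩⟩
  have hlam : ∀ i : V,
      lamPF (G.induce (G.connectedComponentMk i).supp) = (Fintype.card V : ℝ) - 1 := by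
    intro i
    have hmem : ∀ x : V, x ∈ (G.connectedComponentMk i).supp := by
      intro x
      rw [hsupp i]
      exact Set.mem_univ x
    haveI : Nonempty ((G.connectedComponentMk i).supp) := ⟨⟨i, hmem i⟩⟩
    have hind : G.induce (G.connectedComponentMk i).supp
        = (⊤ : SimpleGraph ((G.connectedComponentMk i).supp)) := by
      ext a b
      simp only [SimpleGraph.comap_adj, Function.Embedding.coe_subtype, SimpleGraph.top_adj, hG]
      exact ⟨fun hab => Subtype.coe_ne_coe.mp hab, fun hab => Subtype.coe_ne_coe.mpr hab⟩
    rw [hind, lamPF_top]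
    have hcard : Fintype.card ((G.connectedComponentMk i).supp) = Fintype.card V :=
      Fintype.card_congr (Equiv.subtypeUnivEquiv hmem)
    rw [hcard]
  unfold perf
  rw [show 2 * (Nat.card G.edgeSet : ℝ) * c = (∑ v : V, (G.degree v : ℝ)) * c by
    rw [handshake_real]]
  rw [Finset.sum_congr rfl (fun i _ => hlam i), Finset.sum_congr rfl (fun v _ => hdeg v),
    Finset.sum_const, Finset.card_univ, nsmul_eq_mul]
  ring


/-- For `n ≥ 2` and cost `0 ≤ c ≤ n / (2n - 1)`, every graph `G` on `n`
vertices satisfies `Π(G) ≤ n (n - 1) (1 - c) = Π(K_n)`; hence the complete graph `K_n` is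
efficient in this cost range. -/
theorem completeGraph_efficient_low_cost (n : ℕ) (hn : 2 ≤ n) (c : ℝ)
    (hc0 : 0 ≤ c) (hc : c ≤ (n : ℝ) / (2 * (n : ℝ) - 1)) :
    (∀ G : SimpleGraph (Fin n), perf G c ≤ (n : ℝ) * ((n : ℝ) - 1) * (1 - c)) ∧
      perf (⊤ : SimpleGraph (Fin n)) c = (n : ℝ) * ((n : ℝ) - 1) * (1 - c) := by
  have hn1 : (1 : ℝ) ≤ (n : ℝ) := by exact_mod_cast Nat.one_le_of_lt hn
  have h2n : (0 : ℝ) < 2 * (n : ℝ) - 1 := by linarith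
  have hcn : c * (2 * (n : ℝ) - 1) ≤ (n : ℝ) := by
    rw [div_eq_mul_inv] at hc
    calc c * (2 * (n:ℝ) - 1) ≤ ((n:ℝ) * (2 * (n:ℝ) - 1)⁻¹) * (2 * (n:ℝ) - 1) :=
          mul_le_mul_of_nonneg_right hc (le_of_lt h2n)
      _ = (n : ℝ) := by rw [mul_assoc, inv_mul_cancel₀ (ne_of_gt h2n), mul_one]
  have hc1 : c ≤ 1 := by nlinarith
  haveI : Nonempty (Fin n) := ⟨⟨0, by omega⟩⟩
  constructor
  · intro G
    exact perf_le_generic G n (Fintype.card_fin n) hn c hc0 hcn hc1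
  · have h := perf_top_generic (⊤ : SimpleGraph (Fin n)) rfl c
    rwa [Fintype.card_fin] at h
end

section
/- Let n ≥ 2 and let c be a cost with c > n/(2n−1). Then for every finite simple graph G on n vertices, the performance satisfies Π(G) ≤ (n − c)² / (4c), i.e. Π(G) ≤ (n/2)(√((n² − c²)/c² + 1) − 1) − (n² − c²)/(4c). -/
open Classical

open Finset Matrix in
lemma stanley_matrix {W : Type*} [Fintype W] [DecidableEq W] [Nonempty W]
    (A : Matrix W W ℝ) (hsymm : ∀ i j, A i j = A j i)
    (h0 : ∀ i j, 0 ≤ A i j) (h1 : ∀ i j, A i j ≤ 1)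
    (hsq : ∀ i j, A i j * A i j = A i j) (hdiag : ∀ i, A i i = 0)
    {m : ℝ} (hm : ∑ i, ∑ j, A i j ≤ 2 * m) :
    sSup (spectrum ℝ A) ^ 2 + sSup (spectrum ℝ A) ≤ 2 * m := by
  have hherm : A.IsHermitian := by
    ext i j
    rw [Matrix.conjTranspose_apply, star_trivial, hsymm]
  set lam := sSup (spectrum ℝ A) with hlam
  have hne : (spectrum ℝ A).Nonempty :=
    ⟨_, hherm.eigenvalues_mem_spectrum_real (Classical.arbitrary W)⟩
  have hmem : lam ∈ spectrum ℝ A := hne.csSup_mem A.finite_spectrum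
  -- eigenvector
  obtain ⟨v, hv0, hv⟩ : ∃ v, v ≠ 0 ∧ A *ᵥ v = lam • v := by
    have hni := spectrum.mem_iff.mp hmem
    rw [Matrix.isUnit_iff_isUnit_det] at hni
    have hdet : (algebraMap ℝ (Matrix W W ℝ) lam - A).det = 0 := by
      by_contra h; exact hni (isUnit_iff_ne_zero.mpr h)
    obtain ⟨v, hvne, hv0⟩ := (Matrix.exists_mulVec_eq_zero_iff).mpr hdet
    refine ⟨v, hvne, ?_⟩
    rw [Matrix.sub_mulVec, sub_eq_zero] at hv0
    have : (algebraMap ℝ (Matrix W W ℝ) lam) *ᵥ v = lam • v := by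
      rw [Algebra.algebraMap_eq_smul_one, Matrix.smul_mulVec, Matrix.one_mulVec]
    rw [← hv0, this]
  set u : W → ℝ := fun i => |v i| with hu
  have hu0 : ∀ i, 0 ≤ u i := fun i => abs_nonneg _
  have hkey : ∀ i, |lam| * u i ≤ (A *ᵥ u) i := by
    intro i
    have hAv : (A *ᵥ v) i = lam * v i := by rw [hv]; rfl
    calc |lam| * u i = |(A *ᵥ v) i| := by rw [hAv, abs_mul]
    _ = |∑ j, A i j * v j| := rfl
    _ ≤ ∑ j, |A i j * v j| := Finset.abs_sum_le_sum_abs _ _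
    _ = ∑ j, A i j * u j := by
        refine Finset.sum_congr rfl fun j _ => ?_
        rw [abs_mul, abs_of_nonneg (h0 i j)]
    _ = (A *ᵥ u) i := rfl
  have hkey' : ∀ i, lam * u i ≤ (A *ᵥ u) i := fun i =>
    le_trans (mul_le_mul_of_nonneg_right (le_abs_self lam) (hu0 i)) (hkey i)
  set d : W → ℝ := fun i => ∑ j, A i j with hd
  have hd0 : ∀ i, 0 ≤ d i := fun i => Finset.sum_nonneg fun j _ => h0 i j
  set T : ℝ := ∑ i, u i ^ 2 with hT
  have hT0 : 0 < T := by
    obtain ⟨j, hj⟩ := Function.ne_iff.mp hv0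
    refine Finset.sum_pos' (fun i _ => sq_nonneg _) ⟨j, Finset.mem_univ j, ?_⟩
    have : u j ≠ 0 := by simpa [hu] using hj
    positivity
  -- Step 1
  have step1 : lam ^ 2 * T ≤ ∑ i, ((A *ᵥ u) i) ^ 2 := by
    rw [Finset.mul_sum]
    refine Finset.sum_le_sum fun i _ => ?_
    have h := pow_le_pow_left₀ (by positivity) (hkey i) 2
    calc lam ^ 2 * u i ^ 2 = (|lam| * u i) ^ 2 := by rw [mul_pow, sq_abs lam]
    _ ≤ ((A *ᵥ u) i) ^ 2 := h
  -- Step 2 : Cauchy-Schwarz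
  have step2 : ∀ i, ((A *ᵥ u) i) ^ 2 ≤ d i * ∑ j, A i j * u j ^ 2 := by
    intro i
    have h := Finset.sum_mul_sq_le_sq_mul_sq Finset.univ (fun j => A i j) (fun j => A i j * u j)
    have e1 : ∑ j, A i j * (A i j * u j) = (A *ᵥ u) i := by
      refine Finset.sum_congr rfl fun j _ => ?_
      rw [← mul_assoc, hsq]
    have e2 : ∑ j, (A i j) ^ 2 = d i := by
      refine Finset.sum_congr rfl fun j _ => ?_
      rw [sq, hsq]
    have e3 : ∑ j, (A i j * u j) ^ 2 = ∑ j, A i j * u j ^ 2 := by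
      refine Finset.sum_congr rfl fun j _ => ?_
      rw [mul_pow, sq, hsq]
    rw [e1, e2, e3] at h
    exact h
  -- Step 3
  have inner3 : ∀ j, ∑ i, A i j * d i ≤ 2 * m - d j := by
    intro j
    have e0 : ∑ i, A i j * d i = ∑ i ∈ Finset.univ.erase j, A i j * d i := by
      rw [← Finset.sum_erase_add _ _ (Finset.mem_univ j), hsymm j j, hdiag, zero_mul, add_zero]
    have e1 : ∑ i ∈ Finset.univ.erase j, A i j * d i ≤ ∑ i ∈ Finset.univ.erase j, d i := by
      refine Finset.sum_le_sum fun i _ => ?_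
      calc A i j * d i ≤ 1 * d i := mul_le_mul_of_nonneg_right (h1 i j) (hd0 i)
      _ = d i := one_mul _
    have e2 : ∑ i ∈ Finset.univ.erase j, d i = (∑ i, d i) - d j := by
      rw [← Finset.sum_erase_add _ _ (Finset.mem_univ j)]; ring
    have e3 : ∑ i, d i ≤ 2 * m := hm
    rw [e0]
    calc ∑ i ∈ Finset.univ.erase j, A i j * d i ≤ (∑ i, d i) - d j := by rw [← e2]; exact e1
    _ ≤ 2 * m - d j := by linarith
  have step3 : ∑ i, d i * ∑ j, A i j * u j ^ 2 ≤ ∑ j, (2 * m - d j) * u j ^ 2 := by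
    have swap : ∑ i, d i * ∑ j, A i j * u j ^ 2 = ∑ j, (∑ i, A i j * d i) * u j ^ 2 := by
      simp_rw [Finset.mul_sum, Finset.sum_mul]
      rw [Finset.sum_comm]
      refine Finset.sum_congr rfl fun j _ => Finset.sum_congr rfl fun i _ => by ring
    rw [swap]
    refine Finset.sum_le_sum fun j _ => ?_
    exact mul_le_mul_of_nonneg_right (inner3 j) (sq_nonneg _)
  -- Step 4
  have step4 : lam * T ≤ ∑ j, d j * u j ^ 2 := by
    have e1 : lam * T = ∑ i, (lam * u i) * u i := by
      rw [hT, Finset.mul_sum]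
      exact Finset.sum_congr rfl fun i _ => by ring
    have e2 : ∑ i, (lam * u i) * u i ≤ ∑ i, (A *ᵥ u) i * u i :=
      Finset.sum_le_sum fun i _ => mul_le_mul_of_nonneg_right (hkey' i) (hu0 i)
    have e3 : ∑ i, (A *ᵥ u) i * u i ≤ ∑ i, ∑ j, A i j * (u i ^ 2 + u j ^ 2) / 2 := by
      refine Finset.sum_le_sum fun i _ => ?_
      have : (A *ᵥ u) i * u i = ∑ j, A i j * u j * u i := by
        rw [Matrix.mulVec, dotProduct, Finset.sum_mul]
      rw [this]
      refine Finset.sum_le_sum fun j _ => ?_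
      have h2 : u j * u i ≤ (u i ^ 2 + u j ^ 2) / 2 := by nlinarith [sq_nonneg (u i - u j)]
      calc A i j * u j * u i = A i j * (u j * u i) := by ring
      _ ≤ A i j * ((u i ^ 2 + u j ^ 2) / 2) := mul_le_mul_of_nonneg_left h2 (h0 i j)
      _ = A i j * (u i ^ 2 + u j ^ 2) / 2 := by ring
    have e4 : ∑ i, ∑ j, A i j * (u i ^ 2 + u j ^ 2) / 2 = ∑ j, d j * u j ^ 2 := by
      have expand : ∀ i j : W, A i j * (u i ^ 2 + u j ^ 2) / 2
          = A i j * u i ^ 2 / 2 + A i j * u j ^ 2 / 2 := fun i j => by ring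
      simp_rw [expand, Finset.sum_add_distrib]
      have p1 : ∑ i, ∑ j, A i j * u i ^ 2 / 2 = ∑ i, d i * u i ^ 2 / 2 := by
        refine Finset.sum_congr rfl fun i _ => ?_
        rw [hd, Finset.sum_mul, Finset.sum_div]
      have p2 : ∑ i, ∑ j, A i j * u j ^ 2 / 2 = ∑ j, d j * u j ^ 2 / 2 := by
        rw [Finset.sum_comm]
        refine Finset.sum_congr rfl fun j _ => ?_
        rw [hd, Finset.sum_mul, Finset.sum_div]
        exact Finset.sum_congr rfl fun i _ => by rw [hsymm j i]
      rw [p1, p2, ← Finset.sum_add_distrib]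
      exact Finset.sum_congr rfl fun i _ => by ring
    calc lam * T = ∑ i, (lam * u i) * u i := e1
    _ ≤ ∑ i, (A *ᵥ u) i * u i := e2
    _ ≤ ∑ i, ∑ j, A i j * (u i ^ 2 + u j ^ 2) / 2 := e3
    _ = ∑ j, d j * u j ^ 2 := e4
  -- Combine
  have main : (lam ^ 2 + lam) * T ≤ (2 * m) * T := by
    have c1 : ∑ i, ((A *ᵥ u) i) ^ 2 ≤ ∑ j, (2 * m - d j) * u j ^ 2 :=
      le_trans (Finset.sum_le_sum fun i _ => step2 i) step3
    have c2 : ∑ j, (2 * m - d j) * u j ^ 2 + ∑ j, d j * u j ^ 2 = (2 * m) * T := by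
      rw [← Finset.sum_add_distrib, hT, Finset.mul_sum]
      exact Finset.sum_congr rfl fun j _ => by ring
    calc (lam ^ 2 + lam) * T = lam ^ 2 * T + lam * T := by ring
    _ ≤ ∑ i, ((A *ᵥ u) i) ^ 2 + ∑ j, d j * u j ^ 2 := add_le_add step1 step4
    _ ≤ ∑ j, (2 * m - d j) * u j ^ 2 + ∑ j, d j * u j ^ 2 := by linarith
    _ = (2 * m) * T := c2
  exact le_of_mul_le_mul_right main hT0

open Finset Matrix in
lemma stanley_graph {W : Type*} [Fintype W] [Nonempty W] (H : SimpleGraph W) :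
    lamPF H ^ 2 + lamPF H ≤ 2 * (Nat.card H.edgeSet : ℝ) := by
  classical
  have hcard : (Nat.card H.edgeSet : ℝ) = (H.edgeFinset.card : ℝ) := by
    rw [Nat.card_eq_fintype_card, SimpleGraph.edgeFinset_card]
  have hrow : ∀ i, ∑ j, H.adjMatrix ℝ i j = (H.degree i : ℝ) := by
    intro i
    simp [SimpleGraph.adjMatrix_apply, Finset.sum_boole, SimpleGraph.degree,
      SimpleGraph.neighborFinset_eq_filter]
  have hm : ∑ i, ∑ j, H.adjMatrix ℝ i j ≤ 2 * (Nat.card H.edgeSet : ℝ) := by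
    have : ∑ i, ∑ j, H.adjMatrix ℝ i j = ((∑ i, H.degree i : ℕ) : ℝ) := by
      rw [Nat.cast_sum]
      exact Finset.sum_congr rfl fun i _ => hrow i
    rw [this, SimpleGraph.sum_degrees_eq_twice_card_edges, hcard]
    push_cast
    exact le_refl _
  unfold lamPF
  refine stanley_matrix (H.adjMatrix ℝ) ?_ ?_ ?_ ?_ ?_ hm
  · intro i j
    simp only [SimpleGraph.adjMatrix_apply]
    rw [SimpleGraph.adj_comm]
  · intro i j
    rw [SimpleGraph.adjMatrix_apply]
    split <;> norm_num
  · intro i j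
    rw [SimpleGraph.adjMatrix_apply]
    split <;> norm_num
  · intro i j
    rw [SimpleGraph.adjMatrix_apply]
    split <;> norm_num
  · intro i
    simp [SimpleGraph.adjMatrix_apply]

lemma lamPF_irrel {V : Type*} (i1 i2 : Fintype V) (G : SimpleGraph V) :
    @lamPF V i1 G = @lamPF V i2 G := by
  rw [Subsingleton.elim i1 i2]

open Finset in
lemma sum_lam_bound (n : ℕ) (hn : 2 ≤ n) (c m : ℝ) (hc0 : 0 < c) (hm0 : 0 ≤ m)
    (f : Fin n → ℝ) (key : ∀ i, f i ^ 2 + f i ≤ 2 * m) :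
    (∑ i, f i) - 2 * m * c ≤ ((n : ℝ) - c) ^ 2 / (4 * c) := by
  have hn2 : (2 : ℝ) ≤ (n : ℝ) := by exact_mod_cast hn
  have hne : (univ : Finset (Fin n)).Nonempty := ⟨⟨0, by omega⟩, mem_univ _⟩
  set X := univ.sup' hne f with hX
  obtain ⟨i0, -, hi0⟩ := Finset.exists_mem_eq_sup' hne f
  have hXq : X ^ 2 + X ≤ 2 * m := by rw [hX, hi0]; exact key i0
  have hsum : ∑ i, f i ≤ (n : ℝ) * X := by
    have h := Finset.sum_le_card_nsmul univ f X (fun i _ => Finset.le_sup' f (mem_univ i))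
    simpa [nsmul_eq_mul] using h
  rw [le_div_iff₀ (by positivity : (0:ℝ) < 4 * c)]
  nlinarith [sq_nonneg ((n : ℝ) - c - 2 * c * X),
    mul_le_mul_of_nonneg_left hXq (sq_nonneg c),
    mul_le_mul_of_nonneg_right hsum hc0.le, hm0, hc0.le]

/-- For `n ≥ 2` and cost `c > n / (2n - 1)`, every graph `G` on `n` vertices
satisfies `Π(G) ≤ (n - c)² / (4c)`, which equals
`(n/2) (√((n² - c²)/c² + 1) - 1) - (n² - c²)/(4c)`. -/
theorem perf_le_of_high_cost (n : ℕ) (hn : 2 ≤ n) (c : ℝ)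
    (hc : (n : ℝ) / (2 * (n : ℝ) - 1) < c) :
    (∀ G : SimpleGraph (Fin n), perf G c ≤ ((n : ℝ) - c) ^ 2 / (4 * c)) ∧
      ((n : ℝ) - c) ^ 2 / (4 * c) =
        ((n : ℝ) / 2) * (Real.sqrt (((n : ℝ) ^ 2 - c ^ 2) / c ^ 2 + 1) - 1)
          - ((n : ℝ) ^ 2 - c ^ 2) / (4 * c) := by
  have hn2 : (2 : ℝ) ≤ (n : ℝ) := by exact_mod_cast hn
  have hc0 : (0 : ℝ) < c :=
    lt_trans (div_pos (by linarith) (by linarith)) hc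
  constructor
  · intro G
    unfold perf
    refine sum_lam_bound n hn c _ hc0 (Nat.cast_nonneg _) _ ?_
    intro i
    haveI : Nonempty ((G.connectedComponentMk i).supp) :=
      ⟨⟨i, SimpleGraph.ConnectedComponent.mem_supp_iff _ _ |>.mpr rfl⟩⟩
    rw [lamPF_irrel _ inferInstance (G.induce (G.connectedComponentMk i).supp)]
    refine le_trans (stanley_graph _) ?_
    have hle : Nat.card (G.induce (G.connectedComponentMk i).supp).edgeSet
        ≤ Nat.card G.edgeSet :=
      Nat.card_le_card_of_injective _
        (SimpleGraph.Embedding.induce _).mapEdgeSet.injective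
    have hle' : ((Nat.card (G.induce (G.connectedComponentMk i).supp).edgeSet : ℝ))
        ≤ (Nat.card G.edgeSet : ℝ) := by exact_mod_cast hle
    linarith
  · have h2 : ((n : ℝ) ^ 2 - c ^ 2) / c ^ 2 + 1 = ((n : ℝ) / c) ^ 2 := by
      field_simp
      ring
    rw [h2, Real.sqrt_sq (by positivity)]
    field_simp
    ring
end

section
/- For every cost c > 0 there exists n₀ such that for all n ≥ n₀ the star K_{1,n−1} is bilaterally stable: for every pair of distinct non-adjacent vertices u, v of K_{1,n−1} (i.e. every pair of distinct leaves), the increase in the largest eigenvalue from adding the edge uv satisfies λ_PF(K_{1,n−1} + uv) − λ_PF(K_{1,n−1}) < c; and moreover the increase from attaching a new leaf to the center, √n − √(n−1), is also less than c. -/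
open Classical

/-- The star `K_{1,n-1}` on `n` vertices: vertex `0` (the center) is adjacent to every
other vertex (the leaves), and there are no further edges. -/
def starG (n : ℕ) : SimpleGraph (Fin n) where
  Adj u v := u ≠ v ∧ ((u : ℕ) = 0 ∨ (v : ℕ) = 0)
  symm := by
    constructor
    intro u v h
    exact ⟨h.1.symm, h.2.symm⟩
  loopless := by
    constructor
    intro u h
    exact h.1 rfl

open Matrix

lemma eigvec_of_mem_spectrum {n : ℕ} [DecidableEq (Fin n)] {M : Matrix (Fin n) (Fin n) ℝ} {x : ℝ}
    (hx : x ∈ spectrum ℝ M) : ∃ v, v ≠ 0 ∧ M *ᵥ v = x • v := by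
  rw [spectrum.mem_iff] at hx
  have hdet : ((algebraMap ℝ (Matrix (Fin n) (Fin n) ℝ)) x - M).det = 0 := by
    by_contra h
    exact hx ((Matrix.isUnit_iff_isUnit_det _).mpr (isUnit_iff_ne_zero.mpr h))
  obtain ⟨v, hv0, hv⟩ := Matrix.exists_mulVec_eq_zero_iff.mpr hdet
  refine ⟨v, hv0, ?_⟩
  rw [Algebra.algebraMap_eq_smul_one, Matrix.sub_mulVec, Matrix.smul_mulVec,
    Matrix.one_mulVec, sub_eq_zero] at hv
  exact hv.symm

lemma abs_eig_le {n : ℕ} {M : Matrix (Fin n) (Fin n) ℝ} {x : ℝ} {v : Fin n → ℝ}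
    (hv : v ≠ 0) (h : M *ᵥ v = x • v) {B : ℝ}
    (hB : ∀ i, ∑ j, |M i j| ≤ B) : |x| ≤ B := by
  have hne : (Finset.univ : Finset (Fin n)).Nonempty := by
    rcases Nat.eq_zero_or_pos n with h0 | h0
    · subst h0; exact absurd (Subsingleton.elim v 0) hv
    · exact ⟨⟨0, h0⟩, Finset.mem_univ _⟩
  obtain ⟨i, -, hi⟩ := Finset.exists_max_image Finset.univ (fun i => |v i|) hne
  have hvi : 0 < |v i| := by
    rcases Function.ne_iff.mp hv with ⟨j, hj⟩
    exact lt_of_lt_of_le (abs_pos.mpr hj) (hi j (Finset.mem_univ j))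
  have key : |x| * |v i| ≤ B * |v i| := by
    have h1 : |x| * |v i| = |(M *ᵥ v) i| := by rw [h]; simp [abs_mul]
    rw [h1]
    calc |(M *ᵥ v) i| = |∑ j, M i j * v j| := by rfl
      _ ≤ ∑ j, |M i j * v j| := Finset.abs_sum_le_sum_abs _ _
      _ = ∑ j, |M i j| * |v j| := by simp [abs_mul]
      _ ≤ ∑ j, |M i j| * |v i| :=
          Finset.sum_le_sum fun j _ =>
            mul_le_mul_of_nonneg_left (hi j (Finset.mem_univ j)) (abs_nonneg _)
      _ = (∑ j, |M i j|) * |v i| := by rw [Finset.sum_mul]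
      _ ≤ B * |v i| := mul_le_mul_of_nonneg_right (hB i) (le_of_lt hvi)
  exact le_of_mul_le_mul_right key hvi

lemma spec_bddAbove {n : ℕ} [DecidableEq (Fin n)] (G : SimpleGraph (Fin n)) :
    ∀ x ∈ spectrum ℝ (G.adjMatrix ℝ), x ≤ (n : ℝ) := by
  intro x hx
  obtain ⟨w, hw0, hweig⟩ := eigvec_of_mem_spectrum hx
  have habs : |x| ≤ (n:ℝ) := by
    refine abs_eig_le hw0 hweig fun i => ?_
    calc ∑ j, |G.adjMatrix ℝ i j| ≤ ∑ _j : Fin n, (1:ℝ) := by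
          refine Finset.sum_le_sum fun j _ => ?_
          rw [SimpleGraph.adjMatrix_apply]
          split <;> norm_num
      _ = (n:ℝ) := by simp
  exact le_trans (le_abs_self x) habs

lemma spec_sup_le_aux {n : ℕ} [DecidableEq (Fin n)] {u v : Fin n} (huv : u ≠ v)
    (hu : (u:ℕ) ≠ 0) (hv : (v:ℕ) ≠ 0) (A : Matrix (Fin n) (Fin n) ℝ)
    (hAdef : ∀ i j, A i j
      = if (starG n ⊔ SimpleGraph.fromEdgeSet {s(u, v)}).Adj i j then (1:ℝ) else 0)
    {x : ℝ} {w : Fin n → ℝ} (hw0 : w ≠ 0) (hweig : A *ᵥ w = x • w) :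
    x ≤ Real.sqrt ((n:ℝ) + 1) := by
  haveI : NeZero n := ⟨Nat.pos_iff_ne_zero.mp u.pos⟩
  set G' := starG n ⊔ SimpleGraph.fromEdgeSet {s(u, v)} with hG'
  set d : Fin n → ℝ := fun k => ∑ j, A k j with hd
  have huF : u ≠ (0 : Fin n) := fun h => hu (by rw [h]; simp)
  have hvF : v ≠ (0 : Fin n) := fun h => hv (by rw [h]; simp)
  have hA0 : ∀ i j, 0 ≤ A i j := by
    intro i j; rw [hAdef i j]; split <;> norm_num
  have hA1 : ∀ i j, A i j ≤ 1 := by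
    intro i j; rw [hAdef i j]; split <;> norm_num
  have hAdiag : ∀ i, A i i = 0 := by
    intro i; rw [hAdef i i]; simp
  have hadj : ∀ k j : Fin n, (k:ℕ) ≠ 0 → G'.Adj k j →
      j = 0 ∨ (k = u ∧ j = v) ∨ (k = v ∧ j = u) := by
    intro k j hk h
    rw [hG', SimpleGraph.sup_adj] at h
    rcases h with h | h
    · rcases h.2 with h' | h'
      · exact absurd h' hk
      · exact Or.inl (Fin.ext (by simpa using h'))
    · rw [SimpleGraph.fromEdgeSet_adj, Set.mem_singleton_iff, Sym2.eq_iff] at h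
      exact Or.inr h.1
  set wk : Fin n → Fin n := fun k => if k = u then v else u with hwk
  have hwkne : ∀ k, wk k ≠ 0 := by
    intro k; rw [hwk]; dsimp only; split <;> assumption
  have hsupp : ∀ k j : Fin n, (k:ℕ) ≠ 0 → j ∉ ({0, wk k} : Finset (Fin n)) → A k j = 0 := by
    intro k j hk hj
    rw [hAdef k j, if_neg]
    intro h
    rcases hadj k j hk h with h' | ⟨h1, h2⟩ | ⟨h1, h2⟩
    · exact hj (by simp [h'])
    · refine hj ?_
      have : wk k = j := by rw [hwk]; dsimp only; rw [if_pos h1, h2]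
      simp [this.symm]
    · refine hj ?_
      have : wk k = j := by
        rw [hwk]; dsimp only
        rw [if_neg (by rw [h1]; exact huv.symm), h2]
      simp [this.symm]
  have hsupp1 : ∀ k j : Fin n, (k:ℕ) ≠ 0 → k ≠ u → k ≠ v →
      j ∉ ({0} : Finset (Fin n)) → A k j = 0 := by
    intro k j hk hku hkv hj
    rw [hAdef k j, if_neg]
    intro h
    rcases hadj k j hk h with h' | ⟨h1, _⟩ | ⟨h1, _⟩
    · exact hj (by simp [h'])
    · exact hku h1
    · exact hkv h1
  have hd_nonneg : ∀ k, 0 ≤ d k := fun k => Finset.sum_nonneg fun j _ => hA0 k j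
  have hd2 : ∀ k : Fin n, (k:ℕ) ≠ 0 → d k ≤ 2 := by
    intro k hk
    have heq : d k = ∑ j ∈ ({0, wk k} : Finset (Fin n)), A k j :=
      (Finset.sum_subset (Finset.subset_univ _) fun j _ hj => hsupp k j hk hj).symm
    rw [heq]
    calc ∑ j ∈ ({0, wk k} : Finset (Fin n)), A k j
        ≤ ∑ _j ∈ ({0, wk k} : Finset (Fin n)), (1:ℝ) :=
          Finset.sum_le_sum fun j _ => hA1 k j
      _ = (({0, wk k} : Finset (Fin n)).card : ℝ) := by simp
      _ ≤ 2 := by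
          have h2 : ({0, wk k} : Finset (Fin n)).card ≤ 2 := by
            apply le_trans (Finset.card_insert_le _ _); simp
          exact_mod_cast h2
  have hd1 : ∀ k : Fin n, (k:ℕ) ≠ 0 → k ≠ u → k ≠ v → d k ≤ 1 := by
    intro k hk hku hkv
    have heq : d k = ∑ j ∈ ({0} : Finset (Fin n)), A k j :=
      (Finset.sum_subset (Finset.subset_univ _) fun j _ hj => hsupp1 k j hk hku hkv hj).symm
    rw [heq, Finset.sum_singleton]
    exact hA1 k 0
  have hd_le : ∀ k : Fin n, d k ≤ (n:ℝ) - 1 := by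
    intro k
    have heq : d k = ∑ j ∈ Finset.univ.erase k, A k j := by
      rw [show d k = ∑ j, A k j from rfl,
        ← Finset.sum_erase_add Finset.univ _ (Finset.mem_univ k), hAdiag, add_zero]
    rw [heq]
    calc ∑ j ∈ Finset.univ.erase k, A k j ≤ ∑ _j ∈ Finset.univ.erase k, (1:ℝ) :=
          Finset.sum_le_sum fun j _ => hA1 k j
      _ = ((Finset.univ.erase k).card : ℝ) := by simp
      _ = (n:ℝ) - 1 := by
          rw [Finset.card_erase_of_mem (Finset.mem_univ k), Finset.card_univ,
            Fintype.card_fin, Nat.cast_sub u.pos]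
          simp
  have hval : ∀ k : Fin n, k ≠ 0 → (k:ℕ) ≠ 0 :=
    fun k hk h => hk (Fin.ext (by simpa using h))
  have hB : ∀ i, ∑ j, |(A * A) i j| ≤ (n:ℝ) + 1 := by
    intro i
    have habs : ∀ j, |(A * A) i j| = (A * A) i j := by
      intro j
      refine abs_of_nonneg ?_
      rw [Matrix.mul_apply]
      exact Finset.sum_nonneg fun k _ => mul_nonneg (hA0 i k) (hA0 k j)
    rw [Finset.sum_congr rfl fun j _ => habs j]
    have hrow : ∑ j, (A * A) i j = ∑ k, A i k * d k := by
      simp only [Matrix.mul_apply]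
      rw [Finset.sum_comm]
      refine Finset.sum_congr rfl fun k _ => ?_
      rw [show d k = ∑ j, A k j from rfl, Finset.mul_sum]
    rw [hrow]
    by_cases hi : i = 0
    · subst hi
      have hterm : ∀ k : Fin n, A 0 k * d k ≤
          (if k = 0 then (0:ℝ) else 1) + (if k = u then (1:ℝ) else 0)
            + (if k = v then (1:ℝ) else 0) := by
        intro k
        by_cases hk0 : k = 0
        · subst hk0
          rw [hAdiag, zero_mul, if_pos rfl, if_neg (Ne.symm huF), if_neg (Ne.symm hvF)]
          norm_num
        · have hkv' : (k:ℕ) ≠ 0 := hval k hk0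
          have hle : A 0 k * d k ≤ d k := mul_le_of_le_one_left (hd_nonneg k) (hA1 0 k)
          by_cases hku : k = u
          · rw [if_neg hk0, if_pos hku]
            have := hd2 k hkv'
            split <;> linarith
          · by_cases hkv : k = v
            · rw [if_neg hk0, if_neg hku, if_pos hkv]
              have := hd2 k hkv'
              linarith
            · rw [if_neg hk0, if_neg hku, if_neg hkv]
              have := hd1 k hkv' hku hkv
              linarith
      calc ∑ k, A 0 k * d k
          ≤ ∑ k : Fin n, ((if k = 0 then (0:ℝ) else 1) + (if k = u then (1:ℝ) else 0)
              + (if k = v then (1:ℝ) else 0)) :=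
            Finset.sum_le_sum fun k _ => hterm k
        _ = (∑ k : Fin n, (if k = 0 then (0:ℝ) else 1))
            + (∑ k : Fin n, (if k = u then (1:ℝ) else 0))
            + (∑ k : Fin n, (if k = v then (1:ℝ) else 0)) := by
            rw [← Finset.sum_add_distrib, ← Finset.sum_add_distrib]
        _ = ((n:ℝ) - 1) + 1 + 1 := by
            have h1 : ∑ k : Fin n, (if k = 0 then (0:ℝ) else 1) = (n:ℝ) - 1 := by
              have hsplit : ∀ k : Fin n, (if k = 0 then (0:ℝ) else 1)
                  = 1 - (if k = 0 then (1:ℝ) else 0) := by intro k; split <;> ring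
              rw [Finset.sum_congr rfl fun k _ => hsplit k, Finset.sum_sub_distrib,
                Finset.sum_const, Finset.sum_ite_eq' Finset.univ (0 : Fin n) (fun _ => (1:ℝ))]
              simp
            have h2 : ∑ k : Fin n, (if k = u then (1:ℝ) else 0) = 1 := by
              rw [Finset.sum_ite_eq' Finset.univ u (fun _ => (1:ℝ))]; simp
            have h3 : ∑ k : Fin n, (if k = v then (1:ℝ) else 0) = 1 := by
              rw [Finset.sum_ite_eq' Finset.univ v (fun _ => (1:ℝ))]; simp
            rw [h1, h2, h3]
        _ ≤ (n:ℝ) + 1 := by linarith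
    · have hival : (i:ℕ) ≠ 0 := hval i hi
      have heq : ∑ k, A i k * d k = ∑ k ∈ ({0, wk i} : Finset (Fin n)), A i k * d k := by
        refine (Finset.sum_subset (Finset.subset_univ _) fun k _ hk => ?_).symm
        rw [hsupp i k hival hk, zero_mul]
      rw [heq, Finset.sum_pair (Ne.symm (hwkne i))]
      have h1 : A i 0 * d 0 ≤ (n:ℝ) - 1 :=
        le_trans (mul_le_of_le_one_left (hd_nonneg 0) (hA1 i 0)) (hd_le 0)
      have h2 : A i (wk i) * d (wk i) ≤ 2 :=
        le_trans (mul_le_of_le_one_left (hd_nonneg _) (hA1 i _))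
          (hd2 _ (hval _ (hwkne i)))
      linarith
  have h2 : (A * A) *ᵥ w = (x * x) • w := by
    rw [← Matrix.mulVec_mulVec, hweig, Matrix.mulVec_smul, hweig, smul_smul]
  have habs := abs_eig_le hw0 h2 hB
  have hx2 : x ^ 2 ≤ (n:ℝ) + 1 := by nlinarith [le_abs_self (x * x)]
  calc x ≤ |x| := le_abs_self x
    _ = Real.sqrt (x ^ 2) := (Real.sqrt_sq_eq_abs x).symm
    _ ≤ Real.sqrt ((n:ℝ) + 1) := Real.sqrt_le_sqrt hx2


lemma sqrt_mem_spectrum_star {n : ℕ} [DecidableEq (Fin n)] (hn : 2 ≤ n) :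
    Real.sqrt ((n:ℝ) - 1) ∈ spectrum ℝ ((starG n).adjMatrix ℝ) := by
  haveI : NeZero n := ⟨by omega⟩
  have hn1 : (0:ℝ) ≤ (n:ℝ) - 1 := by
    have : (2:ℝ) ≤ (n:ℝ) := by exact_mod_cast hn
    linarith
  set x := Real.sqrt ((n:ℝ)-1) with hx
  set w : Fin n → ℝ := fun k => if k = 0 then x else 1 with hw
  rw [spectrum.mem_iff, Matrix.isUnit_iff_isUnit_det, isUnit_iff_ne_zero, not_not,
    ← Matrix.exists_mulVec_eq_zero_iff]
  refine ⟨w, ?_, ?_⟩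
  · intro h
    have h1 := congrFun h ⟨1, by omega⟩
    simp only [hw, Fin.ext_iff, Fin.val_zero, Pi.zero_apply] at h1
    norm_num at h1
  · funext i
    rw [Algebra.algebraMap_eq_smul_one, Matrix.sub_mulVec, Matrix.smul_mulVec,
      Matrix.one_mulVec]
    have hmv : ((starG n).adjMatrix ℝ *ᵥ w) i = ∑ j, (if (starG n).Adj i j then (1:ℝ) else 0) * w j := by
      simp [Matrix.mulVec, dotProduct, SimpleGraph.adjMatrix_apply]
    show x • w i - ((starG n).adjMatrix ℝ *ᵥ w) i = 0
    rw [hmv]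
    by_cases hi : i = 0
    · subst hi
      have hterm : ∀ j : Fin n, (if (starG n).Adj 0 j then (1:ℝ) else 0) * w j
          = if j = 0 then 0 else 1 := by
        intro j
        by_cases hj : j = 0
        · subst hj; simp [starG]
        · have hadj : (starG n).Adj 0 j := by
            refine ⟨fun h => hj h.symm, Or.inl ?_⟩
            simp
          simp [hadj, hw, hj]
      rw [Finset.sum_congr rfl (fun j _ => hterm j)]
      have hsum : ∑ j : Fin n, (if j = 0 then (0:ℝ) else 1) = (n:ℝ) - 1 := by
        have hsplit : ∀ j : Fin n, (if j = 0 then (0:ℝ) else 1)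
            = 1 - (if j = 0 then (1:ℝ) else 0) := by
          intro j; split <;> ring
        rw [Finset.sum_congr rfl fun j _ => hsplit j, Finset.sum_sub_distrib,
          Finset.sum_const, Finset.sum_ite_eq' Finset.univ (0 : Fin n) (fun _ => (1:ℝ))]
        simp
      rw [hsum]
      simp only [hw, if_pos rfl, smul_eq_mul]
      rw [hx, Real.mul_self_sqrt hn1]; ring
    · have hival : (i : ℕ) ≠ 0 := by
        intro h
        exact hi (Fin.ext (by simpa using h))
      have hterm : ∀ j : Fin n, (if (starG n).Adj i j then (1:ℝ) else 0) * w j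
          = if j = 0 then x else 0 := by
        intro j
        by_cases hj : j = 0
        · subst hj
          have hadj : (starG n).Adj i 0 := ⟨hi, Or.inr (by simp)⟩
          simp [hadj, hw]
        · have hjval : (j : ℕ) ≠ 0 := by
            intro h
            exact hj (Fin.ext (by simpa using h))
          have hadj : ¬ (starG n).Adj i j := by
            intro h
            rcases h.2 with h' | h'
            · exact hival h'
            · exact hjval h'
          simp [hadj, hj]
      rw [Finset.sum_congr rfl fun j _ => hterm j,
        Finset.sum_ite_eq' Finset.univ (0 : Fin n) (fun _ => x)]
      simp [hw, hi]


/-- For every cost `c > 0` there is `n₀` such that for all `n ≥ n₀` the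
star `K_{1,n-1}` is bilaterally stable: adding an edge between any two distinct non-adjacent
vertices (i.e. two leaves) increases the largest eigenvalue by less than `c`, and attaching
a new leaf to the center increases it by `√n - √(n-1) < c`. -/
theorem star_bilaterally_stable (c : ℝ) (hc : 0 < c) :
    ∃ n₀ : ℕ, ∀ n : ℕ, n₀ ≤ n →
      (∀ u v : Fin n, u ≠ v → ¬ (starG n).Adj u v →
          lamPF (starG n ⊔ SimpleGraph.fromEdgeSet {s(u, v)}) - lamPF (starG n) < c) ∧
        Real.sqrt (n : ℝ) - Real.sqrt ((n : ℝ) - 1) < c := by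
  refine ⟨⌈(1/c)^2⌉₊ + 2, fun n hn => ?_⟩
  have hn2 : 2 ≤ n := by omega
  have hnR : (1/c)^2 + 2 ≤ (n:ℝ) := by
    have h1 : ((⌈(1/c)^2⌉₊ : ℝ)) ≥ (1/c)^2 := Nat.le_ceil _
    have h2 : ((⌈(1/c)^2⌉₊ + 2 : ℕ) : ℝ) ≤ (n:ℝ) := by exact_mod_cast hn
    push_cast at h2
    linarith
  have hpos : (0:ℝ) ≤ (n:ℝ) - 1 := by
    have h0 : (0:ℝ) ≤ (1/c)^2 := sq_nonneg _
    linarith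
  have hsqrt : 1/c < Real.sqrt ((n:ℝ) - 1) := by
    rw [show (1/c : ℝ) = Real.sqrt ((1/c)^2) from (Real.sqrt_sq (by positivity)).symm]
    apply Real.sqrt_lt_sqrt (sq_nonneg _)
    linarith
  have hkey : Real.sqrt ((n:ℝ) + 1) < Real.sqrt ((n:ℝ) - 1) + c := by
    have hs : Real.sqrt ((n:ℝ)-1) ^ 2 = (n:ℝ) - 1 := Real.sq_sqrt hpos
    have hcs : 1 < Real.sqrt ((n:ℝ)-1) * c := (div_lt_iff₀ hc).mp hsqrt
    have h1 : (n:ℝ) + 1 < (Real.sqrt ((n:ℝ)-1) + c)^2 := by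
      nlinarith [Real.sqrt_nonneg ((n:ℝ)-1)]
    calc Real.sqrt ((n:ℝ)+1) < Real.sqrt ((Real.sqrt ((n:ℝ)-1) + c)^2) :=
        Real.sqrt_lt_sqrt (by linarith) h1
      _ = Real.sqrt ((n:ℝ)-1) + c := Real.sqrt_sq (by positivity)
  have hstar_ge : Real.sqrt ((n:ℝ) - 1) ≤ lamPF (starG n) := by
    unfold lamPF
    exact le_csSup
      ⟨(n:ℝ), fun x hx => @spec_bddAbove n (fun a b => propDecidable (a = b)) (starG n) x hx⟩
      (@sqrt_mem_spectrum_star n (fun a b => propDecidable (a = b)) hn2)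
  constructor
  · intro u v huv hnadj
    have hu : (u:ℕ) ≠ 0 := fun h => hnadj ⟨huv, Or.inl h⟩
    have hv : (v:ℕ) ≠ 0 := fun h => hnadj ⟨huv, Or.inr h⟩
    have hsup_le : lamPF (starG n ⊔ SimpleGraph.fromEdgeSet {s(u,v)})
        ≤ Real.sqrt ((n:ℝ)+1) := by
      unfold lamPF
      exact Real.sSup_le
        (fun x hx => by
          obtain ⟨w, hw0, hweig⟩ :=
            @eigvec_of_mem_spectrum n (fun a b => propDecidable (a = b)) _ _ hx
          exact spec_sup_le_aux huv hu hv _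
            (fun i j => by
              by_cases h : (starG n ⊔ SimpleGraph.fromEdgeSet {s(u, v)}).Adj i j <;>
                simp [SimpleGraph.adjMatrix_apply, h]) hw0 hweig)
        (Real.sqrt_nonneg _)
    linarith
  · have hle : Real.sqrt (n:ℝ) ≤ Real.sqrt ((n:ℝ)+1) := Real.sqrt_le_sqrt (by linarith)
    linarith
end

section
/- Let c > 0 and let n be an integer with n > (2 + c(1 + c))/(2c). Let G' be the graph on n+1 vertices obtained from the complete graph K_n by adding one new vertex joined by a single edge to one vertex of K_n. Then λ_PF(G') − λ_PF(K_n) = λ_PF(G') − (n − 1) < c. Hence for every cost c > 0 there exists n₀ such that for all n > n₀ the clique K_n is bilaterally stable: no isolated agent can profitably connect to it. -/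
open Classical

open Finset

/-- The graph on `n + 1` vertices consisting of the complete graph `K_n` on the first `n`
vertices together with one extra vertex (the last one) joined by a single edge to
vertex `0` of the clique. -/
def cliquePlus (n : ℕ) : SimpleGraph (Fin (n + 1)) where
  Adj u v := u ≠ v ∧ ((u ≠ Fin.last n ∧ v ≠ Fin.last n) ∨
    (u = 0 ∧ v = Fin.last n) ∨ (v = 0 ∧ u = Fin.last n))
  symm := by
    constructor
    intro u v h
    refine ⟨h.1.symm, ?_⟩
    rcases h.2 with h' | h' | h'
    · exact Or.inl ⟨h'.2, h'.1⟩
    · exact Or.inr (Or.inr h')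
    · exact Or.inr (Or.inl h')
  loopless := by
    constructor
    intro u h
    exact h.1 rfl

section
variable {n : ℕ} (hn : 2 ≤ n)

include hn

lemma last_ne_zero' : (Fin.last n) ≠ (0 : Fin (n+1)) := by
  simp only [ne_eq, Fin.ext_iff, Fin.val_last, Fin.val_zero]
  omega

lemma adj_last (j : Fin (n+1)) : (cliquePlus n).Adj (Fin.last n) j ↔ j = 0 := by
  constructor
  · rintro ⟨h1, (⟨h2, -⟩ | ⟨h2, -⟩ | ⟨h2, -⟩)⟩
    · exact absurd rfl h2
    · exact absurd h2 ((last_ne_zero' hn))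
    · exact h2
  · rintro rfl
    exact ⟨(last_ne_zero' hn), Or.inr (Or.inr ⟨rfl, rfl⟩)⟩

lemma adj_zero (j : Fin (n+1)) : (cliquePlus n).Adj 0 j ↔ j ≠ 0 := by
  constructor
  · rintro ⟨h1, -⟩
    exact fun h => h1 h.symm
  · intro hj
    by_cases hl : j = Fin.last n
    · exact ⟨fun h => hj (hl ▸ h.symm), Or.inr (Or.inl ⟨rfl, hl⟩)⟩
    · exact ⟨fun h => hj h.symm, Or.inl ⟨Ne.symm (last_ne_zero' hn), hl⟩⟩

lemma adj_mid {m : Fin (n+1)} (hm0 : m ≠ 0) (hml : m ≠ Fin.last n) (j : Fin (n+1)) :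
    (cliquePlus n).Adj m j ↔ (j ≠ m ∧ j ≠ Fin.last n) := by
  constructor
  · rintro ⟨h1, (⟨-, h2⟩ | ⟨h2, -⟩ | ⟨-, h2⟩)⟩
    · exact ⟨fun h => h1 h.symm, h2⟩
    · exact absurd h2 hm0
    · exact absurd h2 hml
  · rintro ⟨h1, h2⟩
    exact ⟨fun h => h1 h.symm, Or.inl ⟨hml, h2⟩⟩

end

lemma rowsum_cp {n : ℕ} (hn : 2 ≤ n) (m : Fin (n+1)) :
    ∑ j, (cliquePlus n).adjMatrix ℝ m j
      = if m = Fin.last n then 1 else if m = 0 then (n:ℝ) else (n:ℝ)-1 := by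
  by_cases hml : m = Fin.last n
  · subst hml
    rw [if_pos rfl]
    have h : ∀ j, (cliquePlus n).adjMatrix ℝ (Fin.last n) j = if j = 0 then (1:ℝ) else 0 :=
      fun j => by by_cases h : j = 0 <;> simp [SimpleGraph.adjMatrix_apply, adj_last hn, h]
    simp only [h]
    rw [Finset.sum_ite_eq' univ (0 : Fin (n+1)) (fun _ => (1:ℝ))]
    simp
  · rw [if_neg hml]
    by_cases hm0 : m = 0
    · subst hm0
      rw [if_pos rfl]
      have h : ∀ j, (cliquePlus n).adjMatrix ℝ 0 j = 1 - (if j = 0 then (1:ℝ) else 0) :=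
        fun j => by by_cases h : j = 0 <;> simp [SimpleGraph.adjMatrix_apply, adj_zero hn, h]
      simp only [h, Finset.sum_sub_distrib, Finset.sum_const, card_univ, Fintype.card_fin,
        nsmul_eq_mul, mul_one, Finset.sum_ite_eq', Finset.mem_univ, if_true]
      push_cast; ring
    · rw [if_neg hm0]
      have h : ∀ j, (cliquePlus n).adjMatrix ℝ m j
          = 1 - (if j = m then (1:ℝ) else 0) - (if j = Fin.last n then (1:ℝ) else 0) := by
        intro j
        by_cases h1 : j = m
        · subst h1; simp [SimpleGraph.adjMatrix_apply, adj_mid hn hm0 hml, hml]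
        · by_cases h2 : j = Fin.last n
          · subst h2; simp [SimpleGraph.adjMatrix_apply, adj_mid hn hm0 hml, h1, Ne.symm hml]
          · simp [SimpleGraph.adjMatrix_apply, adj_mid hn hm0 hml, h1, h2]
      simp only [h, Finset.sum_sub_distrib, Finset.sum_const, card_univ, Fintype.card_fin,
        nsmul_eq_mul, mul_one, Finset.sum_ite_eq', Finset.mem_univ, if_true]
      push_cast; ring

lemma rowsumAA_cp {n : ℕ} (hn : 2 ≤ n) (k : Fin (n+1)) :
    ∑ j, ((cliquePlus n).adjMatrix ℝ * (cliquePlus n).adjMatrix ℝ) k j ≤ ((n:ℝ)-1)^2 + 1 := by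
  have hN : (2:ℝ) ≤ (n:ℝ) := by exact_mod_cast hn
  set A := (cliquePlus n).adjMatrix ℝ with hA
  have hswap : ∑ j, (A*A) k j = ∑ p, A k p * (∑ j, A p j) := by
    simp only [Matrix.mul_apply]
    rw [Finset.sum_comm]
    simp only [← Finset.mul_sum]
  have hr : ∀ p, A k p * (∑ j, A p j)
      = A k p * ((n:ℝ)-1) + (if p = (0 : Fin (n+1)) then A k p else 0)
        - (if p = Fin.last n then A k p * ((n:ℝ)-2) else 0) := by
    intro p
    rw [rowsum_cp hn p]
    by_cases h1 : p = Fin.last n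
    · subst h1
      simp [last_ne_zero' hn]
      ring
    · by_cases h2 : p = 0
      · subst h2
        simp [Ne.symm (last_ne_zero' hn), h1]
        ring
      · simp [h1, h2]
  have hmain : ∑ j, (A*A) k j
      = (∑ p, A k p) * ((n:ℝ)-1) + A k 0 - A k (Fin.last n) * ((n:ℝ)-2) := by
    rw [hswap, Finset.sum_congr rfl (fun p _ => hr p), Finset.sum_sub_distrib,
      Finset.sum_add_distrib, Finset.sum_ite_eq' univ (0 : Fin (n+1)) (fun p => A k p),
      Finset.sum_ite_eq' univ (Fin.last n) (fun p => A k p * ((n:ℝ)-2)), ← Finset.sum_mul]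
    simp
  rw [hmain, rowsum_cp hn k]
  by_cases hkl : k = Fin.last n
  · subst hkl
    rw [if_pos rfl]
    have e1 : A (Fin.last n) 0 = 1 := by
      simp [hA, SimpleGraph.adjMatrix_apply, adj_last hn]
    have e2 : A (Fin.last n) (Fin.last n) = 0 := by
      simp [hA, SimpleGraph.adjMatrix_apply]
    rw [e1, e2]
    nlinarith
  · rw [if_neg hkl]
    by_cases hk0 : k = 0
    · subst hk0
      rw [if_pos rfl]
      have e1 : A 0 0 = 0 := by simp [hA, SimpleGraph.adjMatrix_apply]
      have e2 : A 0 (Fin.last n) = 1 := by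
        simp [hA, SimpleGraph.adjMatrix_apply, adj_zero hn, last_ne_zero' hn]
      rw [e1, e2]
      nlinarith
    · rw [if_neg hk0]
      have e1 : A k (Fin.last n) = 0 := by
        simp [hA, SimpleGraph.adjMatrix_apply, adj_mid hn hk0 hkl]
      have e2 : A k 0 ≤ 1 := by
        simp only [hA, SimpleGraph.adjMatrix_apply]
        split <;> norm_num
      rw [e1]
      nlinarith

lemma lamPF_eq {V : Type*} [Fintype V] [DecidableEq V] (G : SimpleGraph V)
    [inst : DecidableRel G.Adj] :
    lamPF G = sSup (spectrum ℝ (G.adjMatrix ℝ)) := by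
  unfold lamPF
  congr!

lemma spectrum_le_of_rowsum {m : Type*} [Fintype m] [DecidableEq m]
    (M : Matrix m m ℝ) (hM : ∀ i j, 0 ≤ M i j) (B : ℝ)
    (hB : ∀ k, ∑ j, M k j ≤ B) {μ : ℝ} (hμ : μ ∈ spectrum ℝ M) : μ ≤ B := by
  have h2 : Module.End.HasEigenvalue (Matrix.toLin' M) μ := by
    rw [Module.End.hasEigenvalue_iff_mem_spectrum]
    rwa [← AlgEquiv.spectrum_eq (Matrix.toLinAlgEquiv' : Matrix m m ℝ ≃ₐ[ℝ] _) M] at hμ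
  obtain ⟨k, hk⟩ := eigenvalue_mem_ball h2
  rw [Metric.mem_closedBall, Real.dist_eq] at hk
  have h3 : ∑ j ∈ univ.erase k, ‖M k j‖ = ∑ j ∈ univ.erase k, M k j := by
    refine Finset.sum_congr rfl fun j _ => ?_
    rw [Real.norm_eq_abs, abs_of_nonneg (hM k j)]
  have h4 : M k k + ∑ j ∈ univ.erase k, M k j = ∑ j, M k j :=
    Finset.add_sum_erase univ _ (mem_univ k)
  have h5 : μ - M k k ≤ ∑ j ∈ univ.erase k, M k j := by
    rw [h3] at hk; exact (le_abs_self _).trans hk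
  have := hB k
  linarith

lemma lamPF_cliquePlus_le {n : ℕ} (hn : 2 ≤ n) :
    lamPF (cliquePlus n) ≤ Real.sqrt (((n:ℝ)-1)^2 + 1) := by
  rw [lamPF_eq]
  set A := (cliquePlus n).adjMatrix ℝ with hA
  have hAnn : ∀ i j, 0 ≤ A i j := by
    intro i j; simp only [hA, SimpleGraph.adjMatrix_apply]; split <;> norm_num
  have hAAnn : ∀ i j, 0 ≤ (A*A) i j := by
    intro i j
    rw [Matrix.mul_apply]
    exact Finset.sum_nonneg fun p _ => mul_nonneg (hAnn i p) (hAnn p j)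
  refine Real.sSup_le (fun μ hμ => ?_) (Real.sqrt_nonneg _)
  have h2 : μ^2 ∈ spectrum ℝ (A*A) := by
    have := spectrum.pow_image_subset A 2 ⟨μ, hμ, rfl⟩
    rwa [pow_two] at this
  have hb : μ^2 ≤ ((n:ℝ)-1)^2 + 1 :=
    spectrum_le_of_rowsum (A*A) hAAnn _ (fun k => rowsumAA_cp hn k) h2
  calc μ ≤ |μ| := le_abs_self μ
    _ = Real.sqrt (μ^2) := (Real.sqrt_sq_eq_abs μ).symm
    _ ≤ _ := Real.sqrt_le_sqrt hb

lemma lamPF_top_s16 (n : ℕ) (hn : 2 ≤ n) :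
    lamPF (⊤ : SimpleGraph (Fin n)) = (n : ℝ) - 1 := by
  rw [lamPF_eq]
  set A : Matrix (Fin n) (Fin n) ℝ := (⊤ : SimpleGraph (Fin n)).adjMatrix ℝ with hA
  have hN : (2:ℝ) ≤ (n:ℝ) := by exact_mod_cast hn
  have hrow : ∀ i : Fin n, ∑ j, A i j = (n : ℝ) - 1 := by
    intro i
    have : ∀ j : Fin n, A i j = 1 - (if j = i then (1:ℝ) else 0) := by
      intro j
      by_cases h : j = i <;> simp [hA, SimpleGraph.adjMatrix_apply, h, Ne.symm, eq_comm]
    simp only [this, Finset.sum_sub_distrib, Finset.sum_const, Finset.card_univ,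
      Fintype.card_fin, nsmul_eq_mul, mul_one, Finset.sum_ite_eq' univ i (fun _ => (1:ℝ)),
      Finset.mem_univ, if_pos]
  have hnonneg : ∀ i j, 0 ≤ A i j := by
    intro i j; simp only [hA, SimpleGraph.adjMatrix_apply]; positivity
  have hup : ∀ μ ∈ spectrum ℝ A, μ ≤ (n:ℝ) - 1 := fun μ hμ =>
    spectrum_le_of_rowsum A hnonneg _ (fun k => le_of_eq (hrow k)) hμ
  have hmem : (n:ℝ) - 1 ∈ spectrum ℝ A := by
    rw [spectrum.mem_iff]
    intro hunit
    have hdet := (Matrix.isUnit_iff_isUnit_det _).mp hunit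
    rw [isUnit_iff_ne_zero] at hdet
    apply hdet
    rw [← Matrix.exists_mulVec_eq_zero_iff]
    refine ⟨fun _ => 1, ?_, ?_⟩
    · intro h0
      have := congrFun h0 ⟨0, by omega⟩
      simp at this
    · rw [Algebra.algebraMap_eq_smul_one]
      ext i
      simp only [Matrix.mulVec, dotProduct, mul_one, Pi.zero_apply,
        Matrix.sub_apply, Matrix.smul_apply, Matrix.one_apply, smul_eq_mul,
        Finset.sum_sub_distrib, mul_ite, mul_one, mul_zero,
        Finset.sum_ite_eq, Finset.mem_univ, if_true]
      rw [hrow i]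
      ring
  exact le_antisymm (Real.sSup_le hup (by linarith)) (le_csSup ⟨(n:ℝ)-1, fun x hx => hup x hx⟩ hmem)

/-- For every cost `c > 0` and every `n > (2 + c(1 + c))/(2c)`, joining a
new isolated vertex to the complete graph `K_n` by one edge increases the largest
eigenvalue `λ_PF(K_n) = n - 1` by less than `c`; hence the clique is bilaterally stable for
`n` large enough. -/
theorem clique_bilaterally_stable (c : ℝ) (hc : 0 < c) (n : ℕ)
    (hn : (2 + c * (1 + c)) / (2 * c) < (n : ℝ)) :
    lamPF (cliquePlus n) - lamPF (⊤ : SimpleGraph (Fin n)) < c ∧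
      lamPF (⊤ : SimpleGraph (Fin n)) = (n : ℝ) - 1 := by
  have h2c : (0:ℝ) < 2*c := by linarith
  rw [div_lt_iff₀ h2c] at hn
  have hcn : 2 + c*(1+c) < 2*c*(n:ℝ) := by linarith
  have hn2 : 2 ≤ n := by
    by_contra h
    push_neg at h
    have hle : (n:ℝ) ≤ 1 := by exact_mod_cast Nat.lt_succ_iff.mp h
    nlinarith [sq_nonneg (c-1)]
  have hN : (2:ℝ) ≤ (n:ℝ) := by exact_mod_cast hn2
  have hK := lamPF_top_s16 n hn2
  refine ⟨?_, hK⟩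
  rw [hK]
  have h1 := lamPF_cliquePlus_le hn2
  have h2 : Real.sqrt (((n:ℝ)-1)^2 + 1) < ((n:ℝ)-1) + c := by
    rw [Real.sqrt_lt' (by linarith : (0:ℝ) < ((n:ℝ)-1)+c)]
    nlinarith [sq_nonneg (2*c-1)]
  linarith
end

section
/- Let n ≥ 2 and let e be any edge of the complete graph K_n. Then λ_PF(K_n) − λ_PF(K_n − e) ≤ 2/n, where K_n − e is the graph obtained from K_n by deleting the edge e. Consequently, if the link cost satisfies c > 2/n (in particular for any fixed c < 1/2 and n ≥ 2/c), the last edge completing the complete graph increases the largest eigenvalue by less than its cost, so the efficient complete graph K_n cannot be reached by the bilateral network formation process with evaluation period τ = 1. -/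
open Classical

section Aux

variable {V : Type*} [Fintype V]

/-- If a nonzero vector is an eigenvector of a real matrix, its eigenvalue is in the spectrum. -/
lemma mem_spectrum_of_eigen {M : Matrix V V ℝ} {x : V → ℝ} (hx : x ≠ 0)
    {μ : ℝ} (h : M.mulVec x = μ • x) : μ ∈ spectrum ℝ M := by
  rw [spectrum.mem_iff]
  intro hU
  have hdet : ((algebraMap ℝ (Matrix V V ℝ) μ) - M).det ≠ 0 :=
    ((Matrix.isUnit_iff_isUnit_det _).mp hU).ne_zero
  apply hdet
  rw [← Matrix.exists_mulVec_eq_zero_iff]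
  refine ⟨x, hx, ?_⟩
  rw [Matrix.sub_mulVec, h, Algebra.algebraMap_eq_smul_one, Matrix.smul_mulVec,
    Matrix.one_mulVec, sub_self]

/-- Every element of the real spectrum of a real matrix has a nonzero eigenvector. -/
lemma exists_eigen_of_mem_spectrum {M : Matrix V V ℝ} {μ : ℝ}
    (h : μ ∈ spectrum ℝ M) : ∃ x : V → ℝ, x ≠ 0 ∧ M.mulVec x = μ • x := by
  rw [spectrum.mem_iff] at h
  have hdet : ((algebraMap ℝ (Matrix V V ℝ) μ) - M).det = 0 := by
    by_contra hd
    exact h ((Matrix.isUnit_iff_isUnit_det _).mpr (isUnit_iff_ne_zero.mpr hd))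
  obtain ⟨x, hx, hx0⟩ := (Matrix.exists_mulVec_eq_zero_iff).mpr hdet
  refine ⟨x, hx, ?_⟩
  rw [Matrix.sub_mulVec, Algebra.algebraMap_eq_smul_one, Matrix.smul_mulVec,
    Matrix.one_mulVec, sub_eq_zero] at hx0
  exact hx0.symm

/-- The real spectrum of a real matrix is bounded above (it is contained in the finite set of
roots of the characteristic polynomial). -/
lemma bddAbove_spectrum [Nonempty V] (M : Matrix V V ℝ) :
    BddAbove (spectrum ℝ M) := by
  have hsub : spectrum ℝ M ⊆ {x | M.charpoly.IsRoot x} := by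
    intro μ hμ
    have h1 : M.charpoly.eval μ ∈ spectrum ℝ (Polynomial.aeval M M.charpoly) :=
      spectrum.subset_polynomial_aeval M M.charpoly ⟨μ, hμ, rfl⟩
    rwa [Matrix.aeval_self_charpoly, spectrum.zero_eq, Set.mem_singleton_iff] at h1
  exact ((Polynomial.finite_setOf_isRoot M.charpoly_monic.ne_zero).subset hsub).bddAbove

/-- Every real spectral value of the adjacency matrix of `K_n` is at most `n - 1`. -/
lemma top_spectrum_le {dt : DecidableRel (⊤ : SimpleGraph V).Adj} (hV : 2 ≤ Fintype.card V)
    {μ : ℝ}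
    (hex : ∃ x : V → ℝ, x ≠ 0 ∧ (@SimpleGraph.adjMatrix ℝ V ⊤ dt _ _).mulVec x = μ • x) :
    μ ≤ (Fintype.card V : ℝ) - 1 := by
  obtain ⟨x, hx0, hx⟩ := hex
  by_cases h1 : μ + 1 = 0
  · have : (1:ℝ) ≤ (Fintype.card V : ℝ) := by exact_mod_cast Nat.one_le_of_lt hV
    linarith
  · have hnb : ∀ i : V, (⊤ : SimpleGraph V).neighborFinset i = Finset.univ.erase i := by
      intro i
      ext j
      simp [SimpleGraph.mem_neighborFinset, Finset.mem_erase, ne_comm]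
    have key : ∀ i, (∑ j, x j) - x i = μ * x i := by
      intro i
      have h := congrFun hx i
      rw [SimpleGraph.adjMatrix_mulVec_apply, hnb i,
        Finset.sum_erase_eq_sub (Finset.mem_univ i)] at h
      simpa using h
    have hxc : ∀ i, x i = (∑ j, x j) / (μ + 1) := by
      intro i
      have := key i
      field_simp
      linarith
    obtain ⟨i0, hi0⟩ : ∃ i, x i ≠ 0 := by
      by_contra h
      push_neg at h
      exact hx0 (funext h)
    have hall : ∀ i, x i = x i0 := fun i => by rw [hxc i, hxc i0]
    have hsum : (∑ j, x j) = (Fintype.card V : ℝ) * x i0 := by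
      rw [Finset.sum_congr rfl fun j _ => hall j, Finset.sum_const, Finset.card_univ,
        nsmul_eq_mul]
    have hk := key i0
    rw [hsum] at hk
    have h3 : ((Fintype.card V : ℝ) - 1 - μ) * x i0 = 0 := by linear_combination hk
    rcases mul_eq_zero.mp h3 with h4 | h4
    · linarith
    · exact absurd h4 hi0

/-- For `n ≥ 3`, the graph `K_n - uv` has an eigenvalue at least `n - 1 - 2/n`, witnessed by
an explicit eigenvector. -/
lemma del_eigen (hV : 3 ≤ Fintype.card V) (u v : V) (huv : u ≠ v)
    {dd : DecidableRel ((⊤ : SimpleGraph V).deleteEdges {s(u, v)}).Adj} :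
    ∃ (lam : ℝ) (x : V → ℝ), x ≠ 0 ∧
      (@SimpleGraph.adjMatrix ℝ V _ dd _ _).mulVec x = lam • x ∧
      (Fintype.card V : ℝ) - 1 - 2 / (Fintype.card V : ℝ) ≤ lam := by
  set n : ℕ := Fintype.card V with hn_def
  have hn : 3 ≤ n := hV
  have hn2 : (2:ℝ) ≤ (n:ℝ) := by exact_mod_cast le_trans (by norm_num) hn
  have hn3 : (3:ℝ) ≤ (n:ℝ) := by exact_mod_cast hn
  have hD : (0:ℝ) ≤ (n:ℝ)^2 + 2*n - 7 := by nlinarith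
  set s : ℝ := Real.sqrt ((n:ℝ)^2 + 2*n - 7) with hs_def
  have hs_sq : s ^ 2 = (n:ℝ)^2 + 2*n - 7 := Real.sq_sqrt hD
  have hs_nonneg : 0 ≤ s := Real.sqrt_nonneg _
  set lam : ℝ := ((n:ℝ) - 3 + s) / 2 with hlam_def
  have hlam_sq : lam ^ 2 = ((n:ℝ) - 3) * lam + 2 * ((n:ℝ) - 2) := by
    rw [hlam_def]
    linear_combination hs_sq / 4
  have hlam_pos : 0 < lam := by
    have : 0 < s := Real.sqrt_pos.mpr (by nlinarith)
    rw [hlam_def]; linarith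
  set x : V → ℝ := fun i => if i = u ∨ i = v then (n:ℝ) - 2 else lam with hx_def
  have hT : ∀ j : V, j ∈ ({u, v}ᶜ : Finset V) ↔ ¬(j = u ∨ j = v) := by
    intro j; simp
  have hTcard : ({u, v}ᶜ : Finset V).card = n - 2 := by
    rw [Finset.card_compl, Finset.card_pair huv]
  have hTcast : ((({u, v}ᶜ : Finset V).card : ℝ)) = (n:ℝ) - 2 := by
    rw [hTcard, Nat.cast_sub (by omega)]
    norm_num
  have hTsum : ∑ j ∈ ({u, v}ᶜ : Finset V), x j = ((n:ℝ) - 2) * lam := by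
    rw [Finset.sum_congr rfl (fun j hj => ?_), Finset.sum_const, nsmul_eq_mul, hTcast]
    rw [hx_def]; simp only [if_neg ((hT j).mp hj)]
  have hS : ∑ j, x j = 2 * ((n:ℝ) - 2) + ((n:ℝ) - 2) * lam := by
    rw [← Finset.sum_compl_add_sum ({u, v} : Finset V) x, hTsum,
      Finset.sum_pair huv]
    have hxu : x u = (n:ℝ) - 2 := by rw [hx_def]; simp
    have hxv : x v = (n:ℝ) - 2 := by rw [hx_def]; simp
    rw [hxu, hxv]; ring
  have hadj : ∀ i j : V,
      (((⊤ : SimpleGraph V).deleteEdges {s(u, v)}).Adj i j) ↔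
        i ≠ j ∧ ¬((i = u ∧ j = v) ∨ (i = v ∧ j = u)) := by
    intro i j
    rw [SimpleGraph.deleteEdges_adj]
    simp [Sym2.eq_iff]
  have hnbu : (((⊤ : SimpleGraph V).deleteEdges {s(u, v)}).neighborFinset u)
      = ({u, v}ᶜ : Finset V) := by
    ext j
    rw [SimpleGraph.mem_neighborFinset, hadj, hT]
    constructor
    · rintro ⟨h1, h2⟩ (rfl | rfl)
      · exact h1 rfl
      · exact h2 (Or.inl ⟨rfl, rfl⟩)
    · intro h
      push_neg at h
      exact ⟨fun h' => h.1 h'.symm, fun h' => by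
        rcases h' with ⟨_, rfl⟩ | ⟨h', _⟩
        · exact h.2 rfl
        · exact huv h'⟩
  have hnbv : (((⊤ : SimpleGraph V).deleteEdges {s(u, v)}).neighborFinset v)
      = ({u, v}ᶜ : Finset V) := by
    ext j
    rw [SimpleGraph.mem_neighborFinset, hadj, hT]
    constructor
    · rintro ⟨h1, h2⟩ (rfl | rfl)
      · exact h2 (Or.inr ⟨rfl, rfl⟩)
      · exact h1 rfl
    · intro h
      push_neg at h
      exact ⟨fun h' => h.2 h'.symm, fun h' => by
        rcases h' with ⟨h', _⟩ | ⟨_, rfl⟩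
        · exact huv h'.symm
        · exact h.1 rfl⟩
  have hnbw : ∀ i : V, ¬(i = u ∨ i = v) →
      (((⊤ : SimpleGraph V).deleteEdges {s(u, v)}).neighborFinset i)
        = Finset.univ.erase i := by
    intro i hi
    push_neg at hi
    ext j
    rw [SimpleGraph.mem_neighborFinset, hadj, Finset.mem_erase]
    constructor
    · rintro ⟨h1, _⟩
      exact ⟨fun h => h1 h.symm, Finset.mem_univ j⟩
    · rintro ⟨h1, _⟩
      refine ⟨fun h => h1 h.symm, ?_⟩
      rintro (⟨rfl, _⟩ | ⟨rfl, _⟩)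
      · exact hi.1 rfl
      · exact hi.2 rfl
  refine ⟨lam, x, ?_, ?_, ?_⟩
  · obtain ⟨w, hw⟩ : ({u, v}ᶜ : Finset V).Nonempty := by
      rw [← Finset.card_pos, hTcard]; omega
    intro h
    have := congrFun h w
    rw [hx_def] at this
    simp only [if_neg ((hT w).mp hw), Pi.zero_apply] at this
    exact hlam_pos.ne' this
  · funext i
    rw [SimpleGraph.adjMatrix_mulVec_apply, Pi.smul_apply, smul_eq_mul]
    by_cases hi : i = u ∨ i = v
    · have hxi : x i = (n:ℝ) - 2 := by rw [hx_def]; simp [hi]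
      rcases hi with rfl | rfl
      · rw [hnbu, hTsum, hxi]; ring
      · rw [hnbv, hTsum, hxi]; ring
    · have hxi : x i = lam := by rw [hx_def]; simp [hi]
      rw [hnbw i hi, Finset.sum_erase_eq_sub (Finset.mem_univ i), hS, hxi]
      nlinarith [hlam_sq]
  · have hn0 : (0:ℝ) < n := by linarith
    have ht : (4 / (n:ℝ)) * n = 4 := by field_simp
    have ht2 : 4 / (n:ℝ) ≤ 2 := by rw [div_le_iff₀ hn0]; linarith
    have ht0 : (0:ℝ) < 4 / (n:ℝ) := by positivity
    have hkey : (n:ℝ) + 1 - 4 / n ≤ s := by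
      rw [hs_def, Real.le_sqrt (by linarith) hD]
      nlinarith [ht, mul_nonneg ht0.le (sub_nonneg.mpr ht2)]
    have h24 : 4 / (n:ℝ) = 2 * (2 / n) := by ring
    rw [hlam_def]
    linarith [hkey]

end Aux

/-- For `n ≥ 2` and any edge `uv` of the complete graph `K_n`, deleting
that edge decreases the largest eigenvalue by at most `2/n`:
`λ_PF(K_n) - λ_PF(K_n - uv) ≤ 2/n`. Consequently, for any cost `c > 2/n` the last edge
completing the complete graph raises the largest eigenvalue by less than `c`, so the
efficient complete graph cannot be reached by the bilateral link formation process. -/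
theorem lamPF_complete_delete_edge (n : ℕ) (hn : 2 ≤ n) (u v : Fin n) (huv : u ≠ v) :
    lamPF (⊤ : SimpleGraph (Fin n)) -
        lamPF ((⊤ : SimpleGraph (Fin n)).deleteEdges {s(u, v)}) ≤ 2 / (n : ℝ) ∧
      ∀ c : ℝ, 2 / (n : ℝ) < c →
        lamPF (⊤ : SimpleGraph (Fin n)) -
          lamPF ((⊤ : SimpleGraph (Fin n)).deleteEdges {s(u, v)}) < c := by
  have hn0 : 0 < n := by omega
  have hcard : Fintype.card (Fin n) = n := Fintype.card_fin n
  have hn2 : (2:ℝ) ≤ (n:ℝ) := by exact_mod_cast hn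
  haveI : Nonempty (Fin n) := ⟨⟨0, hn0⟩⟩
  have htop : lamPF (⊤ : SimpleGraph (Fin n)) ≤ (n : ℝ) - 1 := by
    rw [lamPF]
    apply Real.sSup_le
    · intro μ hμ
      have h := top_spectrum_le (V := Fin n) (by rw [hcard]; exact hn)
        (exists_eigen_of_mem_spectrum hμ)
      rwa [hcard] at h
    · linarith
  have main : lamPF (⊤ : SimpleGraph (Fin n)) -
      lamPF ((⊤ : SimpleGraph (Fin n)).deleteEdges {s(u, v)}) ≤ 2 / (n : ℝ) := by
    by_cases hn3 : 3 ≤ n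
    · obtain ⟨lam, x, hx0, heig, hlam⟩ := del_eigen (V := Fin n) (by rw [hcard]; exact hn3) u v huv
      rw [hcard] at hlam
      have hdel : lam ≤ lamPF ((⊤ : SimpleGraph (Fin n)).deleteEdges {s(u, v)}) := by
        rw [lamPF]
        exact le_csSup (bddAbove_spectrum _) (mem_spectrum_of_eigen hx0 heig)
      linarith
    · have hn2' : n = 2 := by omega
      subst hn2'
      have hnadj : ∀ i j : Fin 2, ¬((⊤ : SimpleGraph (Fin 2)).deleteEdges {s(u, v)}).Adj i j := by
        intro i j hAdj
        rw [SimpleGraph.deleteEdges_adj] at hAdj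
        obtain ⟨hij, hne⟩ := hAdj
        apply hne
        rw [Set.mem_singleton_iff, Sym2.eq_iff]
        have hij' : i ≠ j := hij.ne
        have hu := u.isLt; have hv := v.isLt; have hi := i.isLt; have hj := j.isLt
        have h2 : (u : ℕ) ≠ (v : ℕ) := fun h => huv (Fin.ext h)
        have h3 : (i : ℕ) ≠ (j : ℕ) := fun h => hij' (Fin.ext h)
        simp only [Fin.ext_iff]
        omega
      have hdel : (0:ℝ) ≤ lamPF ((⊤ : SimpleGraph (Fin 2)).deleteEdges {s(u, v)}) := by
        rw [lamPF]
        refine le_csSup (bddAbove_spectrum _) (mem_spectrum_of_eigen (x := fun _ => (1:ℝ)) ?_ ?_)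
        · intro h
          have := congrFun h u
          simp at this
        · have hM : (((⊤ : SimpleGraph (Fin 2)).deleteEdges {s(u, v)}).adjMatrix ℝ :
              Matrix (Fin 2) (Fin 2) ℝ) = 0 := by
            ext i j
            rw [SimpleGraph.adjMatrix_apply, Matrix.zero_apply, if_neg (hnadj i j)]
          funext i; simp only [Matrix.mulVec, dotProduct, SimpleGraph.adjMatrix_apply, hnadj, if_false, ite_false, zero_mul, Finset.sum_const_zero, Pi.smul_apply, zero_smul]
      push_cast at htop ⊢
      norm_num at htop ⊢
      linarith
  exact ⟨main, fun c hc => lt_of_le_of_lt main hc⟩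
end
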